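/- Let $k \geq 2$ and define $\sigma$ on $A_1 \cup A_2$ by $\sigma(\xi) = \xi + 2^k\pi$ for $\xi \in A_1 = [\frac{-2^k\pi}{2^k-1}, -\pi)$ and $\sigma(\xi) = \xi - 2^{k-1}\pi$ for $\xi \in A_2 = [\frac{(2^{2k-1}-2^k)\pi}{2^k-1}, 2^{k-1}\pi - \frac{\pi}{2})$. Extend $\sigma$ 2-homogeneously by $\sigma(x) = 2^{-n}\sigma(2^n x)$ whenever $2^n x \in A_1 \cup A_2$. Then $\sigma$ is involutive on $A_1 \cup A_2$: for every $\xi \in A_1 \cup A_2$, $\sigma^2(\xi) = \xi$, where the second application of $\sigma$ uses the homogeneous extension. Concretely: for $\xi \in A_1$, $2\sigma(\frac{1}{2}\sigma(\xi)) = \xi$, and for $\xi \in A_2$, $\frac{1}{2}\sigma(2\sigma(\xi)) = \xi$. -/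
import Mathlib


open Real Set

/-- Involutivity of the interpolation map `σ` for dilation 2: if `σ(ξ) = ξ + 2^k π` on `A₁`
and `σ(ξ) = ξ - 2^{k-1} π` on `A₂`, then for `ξ ∈ A₁` we have `σ(ξ)/2 ∈ A₂` and
`2σ(σ(ξ)/2) = ξ`, and for `ξ ∈ A₂` we have `2σ(ξ) ∈ A₁` and `σ(2σ(ξ))/2 = ξ`. -/
theorem sigma_involutive_dilation_two (k : ℕ) (hk : 2 ≤ k) (σ : ℝ → ℝ)
    (A₁ : Set ℝ) (hA₁ : A₁ = Ico (-((2:ℝ)^k * π) / ((2:ℝ)^k - 1)) (-π))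
    (A₂ : Set ℝ) (hA₂ : A₂ = Ico ((((2:ℝ)^(2*k-1) - (2:ℝ)^k) * π) / ((2:ℝ)^k - 1))
      ((2:ℝ)^(k-1) * π - π/2))
    (hσ₁ : ∀ ξ ∈ A₁, σ ξ = ξ + (2:ℝ)^k * π)
    (hσ₂ : ∀ ξ ∈ A₂, σ ξ = ξ - (2:ℝ)^(k-1) * π) :
    (∀ ξ ∈ A₁, (1/2) * σ ξ ∈ A₂ ∧ 2 * σ ((1/2) * σ ξ) = ξ) ∧
    (∀ ξ ∈ A₂, 2 * σ ξ ∈ A₁ ∧ (1/2) * σ (2 * σ ξ) = ξ) := by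
  have hk1 : k - 1 + 1 = k := by omega
  set a : ℝ := (2:ℝ)^(k-1) with ha_def
  have h2k : (2:ℝ)^k = 2 * a := by rw [← hk1, pow_succ]; ring
  have h2k1 : (2:ℝ)^(2*k-1) = 2 * a * a := by
    rw [show 2*k-1 = k + (k-1) by omega, pow_add, h2k]
  have ha : (2:ℝ) ≤ a := by
    calc (2:ℝ) = 2^1 := (pow_one 2).symm
    _ ≤ 2^(k-1) := pow_le_pow_right₀ (by norm_num) (by omega)
  have hπ := pi_pos
  have hden : (0:ℝ) < 2*a - 1 := by linarith
  subst hA₁ hA₂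
  rw [h2k, h2k1] at *
  constructor
  · intro ξ hξ
    obtain ⟨h1, h2⟩ := hξ
    have hξlb : -(2*a*π) ≤ ξ * (2*a - 1) := by
      rw [div_le_iff₀ hden] at h1; linarith
    have hσξ : σ ξ = ξ + 2*a*π := hσ₁ ξ ⟨h1, h2⟩
    have hmem : (1/2) * σ ξ ∈ Ico ((2*a*a - 2*a) * π / (2*a - 1)) (a * π - π/2) := by
      rw [hσξ]
      constructor
      · rw [div_le_iff₀ hden]; nlinarith
      · nlinarith
    refine ⟨hmem, ?_⟩
    rw [hσ₂ _ hmem, hσξ]; ring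
  · intro ξ hξ
    obtain ⟨h1, h2⟩ := hξ
    have hξlb : (2*a*a - 2*a) * π ≤ ξ * (2*a - 1) := by
      rw [div_le_iff₀ hden] at h1; linarith
    have hσξ : σ ξ = ξ - a*π := hσ₂ ξ ⟨h1, h2⟩
    have hmem : 2 * σ ξ ∈ Ico (-(2*a*π) / (2*a - 1)) (-π) := by
      rw [hσξ]
      constructor
      · rw [div_le_iff₀ hden]; nlinarith
      · nlinarith
    refine ⟨hmem, ?_⟩
    rw [hσ₁ _ hmem, hσξ]; ring
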